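/- Let p be a prime and f ∈ F_p-bar[x^p] with deg f = d ≥ 2. The Artin–Mazur zeta function of f on the algebraic closure of F_p equals 1/(1 - d·t); in particular it is a rational function over Q. -/

import Mathlib

open Polynomial PowerSeries

theorem zeta_rational_of_mem_xp (p : ℕ) [Fact p.Prime]
    (f : Polynomial (AlgebraicClosure (ZMod p)))
    (hf : ∀ i, ¬ p ∣ i → f.coeff i = 0) (hd : 2 ≤ f.natDegree)
    (a : ℕ → ℕ)
    (ha : ∀ n, a n = Set.ncard {x : AlgebraicClosure (ZMod p) | (fun y => f.eval y)^[n] x = x})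
    (F : PowerSeries ℚ) (hF0 : PowerSeries.constantCoeff F = 1)
    (hF : d⁄dX ℚ F = F * PowerSeries.mk (fun n => (a (n + 1) : ℚ))) :
    F * (1 - PowerSeries.C (f.natDegree : ℚ) * PowerSeries.X) = 1 ∧
      ∃ P Q : Polynomial ℚ, Q ≠ 0 ∧ (Q : PowerSeries ℚ) * F = (P : PowerSeries ℚ) := by
  set K := AlgebraicClosure (ZMod p) with hK
  set d := f.natDegree with hdd
  -- derivative of f is zero
  have hder : derivative f = 0 := by
    ext n
    rw [Polynomial.coeff_derivative, Polynomial.coeff_zero]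
    by_cases h : p ∣ (n + 1)
    · have : ((n + 1 : ℕ) : K) = 0 := by
        exact_mod_cast (CharP.cast_eq_zero_iff K p (n + 1)).mpr h
      push_cast at this ⊢
      rw [this, mul_zero]
    · rw [hf _ h, zero_mul]
  -- the iterates as polynomials
  set Q : ℕ → Polynomial K := fun n => (fun q : Polynomial K => q.comp f)^[n] f with hQ
  have hQsucc : ∀ n, Q (n + 1) = (Q n).comp f := fun n => Function.iterate_succ_apply' _ n f
  have hQeval : ∀ n x, (Q n).eval x = (fun y => f.eval y)^[n + 1] x := by
    intro n
    induction n with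
    | zero => intro x; simp [hQ]
    | succ n ih =>
      intro x
      rw [hQsucc, Polynomial.eval_comp, ih]
      simp only [Function.iterate_succ_apply]
  have hQdeg : ∀ n, (Q n).natDegree = d ^ (n + 1) := by
    intro n
    induction n with
    | zero => simp [hQ, hdd]
    | succ n ih =>
      rw [hQsucc, Polynomial.natDegree_comp, ih, ← hdd]
      ring
  have hQder : ∀ n, derivative (Q n) = 0 := by
    intro n
    induction n with
    | zero => simpa [hQ] using hder
    | succ n ih => rw [hQsucc, Polynomial.derivative_comp, hder, zero_mul]
  -- counting fixed points
  have ha' : ∀ n, (a (n + 1) : ℚ) = (d : ℚ) ^ (n + 1) := by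
    intro n
    have h2 : 2 ≤ d ^ (n + 1) := le_trans hd (Nat.le_self_pow (Nat.succ_ne_zero n) d)
    set q : Polynomial K := Q n - Polynomial.X with hq
    have hlt : (Polynomial.X : Polynomial K).natDegree < (Q n).natDegree := by
      rw [Polynomial.natDegree_X, hQdeg]; omega
    have hqd : q.natDegree = d ^ (n + 1) := by
      rw [hq, Polynomial.natDegree_sub_eq_left_of_natDegree_lt hlt, hQdeg]
    have hq0 : q ≠ 0 := fun h => by simp [h] at hqd; omega
    have hqder : derivative q = -1 := by
      rw [hq, derivative_sub, hQder, Polynomial.derivative_X, zero_sub]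
    have hsep : q.Separable := ⟨0, -1, by rw [hqder]; ring⟩
    have haq : ∀ x : K, Polynomial.aeval x q = Polynomial.eval x q := fun x =>
      congrFun (Polynomial.coe_aeval_eq_eval x) q
    have hset : {x : K | (fun y => f.eval y)^[n + 1] x = x} = q.rootSet K := by
      ext x
      rw [Set.mem_setOf_eq, Polynomial.mem_rootSet, haq, ← hQeval n x]
      constructor
      · intro h
        exact ⟨hq0, by simp [hq, h]⟩
      · intro ⟨_, h⟩
        simp only [hq, Polynomial.eval_sub, Polynomial.eval_X, sub_eq_zero] at h
        exact h
    have hcard : Fintype.card (q.rootSet K) = q.natDegree :=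
      Polynomial.card_rootSet_eq_natDegree hsep (by simpa using IsAlgClosed.splits q)
    rw [ha, hset, Set.ncard_eq_toFinset_card', Set.toFinset_card, hcard, hqd]
    push_cast
    ring
  -- coefficients of F
  have hcoeff : ∀ n, coeff n F = (d : ℚ) ^ n := by
    intro n
    induction n using Nat.strong_induction_on with
    | _ n ih =>
      match n with
      | 0 => simpa [PowerSeries.coeff_zero_eq_constantCoeff] using hF0
      | Nat.succ n =>
        have h1 := congrArg (PowerSeries.coeff n) hF
        rw [PowerSeries.coeff_derivative, PowerSeries.coeff_mul] at h1
        have h2 : ∀ x ∈ Finset.HasAntidiagonal.antidiagonal n,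
            PowerSeries.coeff x.1 F * PowerSeries.coeff x.2 (PowerSeries.mk fun n => (a (n + 1) : ℚ))
              = (d : ℚ) ^ (n + 1) := by
          intro x hx
          rw [Finset.HasAntidiagonal.mem_antidiagonal] at hx
          rw [PowerSeries.coeff_mk, ha', ih x.1 (by omega), ← pow_add]
          congr 1
          omega
        rw [Finset.sum_congr rfl h2, Finset.sum_const, Finset.Nat.card_antidiagonal,
          nsmul_eq_mul] at h1
        have hne : ((n : ℚ) + 1) ≠ 0 := by positivity
        show (PowerSeries.coeff (n + 1)) F = (d : ℚ) ^ (n + 1)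
        refine mul_right_cancel₀ hne ?_
        push_cast at h1 ⊢
        linarith
  -- main identity
  have hmain : F * (1 - PowerSeries.C (d : ℚ) * PowerSeries.X) = 1 := by
    ext n
    rw [mul_sub, mul_one, map_sub]
    have : F * (PowerSeries.C (d : ℚ) * PowerSeries.X)
        = (PowerSeries.C (d : ℚ) * F) * PowerSeries.X := by ring
    rw [this]
    match n with
    | 0 =>
      simp [PowerSeries.coeff_zero_eq_constantCoeff, hF0]
    | Nat.succ n =>
      rw [PowerSeries.coeff_succ_mul_X, PowerSeries.coeff_C_mul, hcoeff, hcoeff,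
        PowerSeries.coeff_one, if_neg (Nat.succ_ne_zero n), pow_succ]
      ring
  refine ⟨hmain, 1, 1 - Polynomial.C (d : ℚ) * Polynomial.X, ?_, ?_⟩
  · intro h
    have := congrArg (Polynomial.coeff · 0) h
    simp at this
  · have : ((1 - Polynomial.C (d : ℚ) * Polynomial.X : Polynomial ℚ) : PowerSeries ℚ)
        = 1 - PowerSeries.C (d : ℚ) * PowerSeries.X := by
      push_cast
      rfl
    rw [this, mul_comm, hmain]
    push_cast
    rfl
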